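/- (Theorem 1, suboptimality relative to infinite horizon) Under Assumptions 1 and 2 with ρ > 0 and γ := C/(1−ρ) > 1, let V̄ > 0, M ≥ 1, and N > N_M. Then for every initial condition x₀ with V_{N,M}(x₀) ≤ V̄, the MPC value function is bounded by the infinite-horizon optimal cost as V_{N,M}(x₀) ≤ (1 + γ ρ_γ^{N−N₀}) · V_{∞,0}(x₀); combined with the closed-loop performance bound, Σ_{k=0}^{∞} ℓ(x(k), u(k)) ≤ V_{∞,0}(x₀)/α_{N,M} with α_{N,M} := ε_{N,M}/(1 + γρ_γ^{N−N₀}) ∈ (0, ε_{N,M}]. -/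

import Mathlib

open Finset Filter
open scoped ENNReal

noncomputable section

open scoped Classical

/-- State/input spaces are Euclidean spaces. -/
abbrev Vec (n : ℕ) := EuclideanSpace ℝ (Fin n)

/-- Open-loop state trajectory: `x(0) = x`, `x(k+1) = f(x(k), u(k))`. -/
def traj {n m : ℕ} (f : Vec n → Vec m → Vec n) (x : Vec n) (u : ℕ → Vec m) : ℕ → Vec n
  | 0 => x
  | k + 1 => f (traj f x u k) (u k)

/-- Closed-loop state trajectory under the feedback `κ` (the map `φ_x(·, x)`). -/
def phiX {n m : ℕ} (f : Vec n → Vec m → Vec n) (κ : Vec n → Vec m) (x : Vec n) : ℕ → Vec n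
  | 0 => x
  | k + 1 => f (phiX f κ x k) (κ (phiX f κ x k))

/-- `ℓ_min(x) := inf_{u ∈ U} ℓ(x, u)`. -/
def lmin {n m : ℕ} (ℓ : Vec n → Vec m → ℝ) (Uset : Set (Vec m)) (x : Vec n) : ℝ :=
  sInf ((fun u => ℓ x u) '' Uset)

/-- Finite-tail cost `V_{f,M}(x)`: sum of the stage cost along the κ-closed loop if the
constraints are satisfied along the tail, and `+∞` otherwise (for `M = 0` it equals `0`). -/
def Vtail {n m : ℕ} (f : Vec n → Vec m → Vec n) (κ : Vec n → Vec m)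
    (ℓ : Vec n → Vec m → ℝ) (Z : Set (Vec n × Vec m)) (M : ℕ) (x : Vec n) : ℝ≥0∞ :=
  if ∀ k < M, (phiX f κ x k, κ (phiX f κ x k)) ∈ Z then
    ENNReal.ofReal (∑ k ∈ Finset.range M, ℓ (phiX f κ x k) (κ (phiX f κ x k)))
  else ⊤

/-- Feasibility of the input sequence `u` over horizon `N` from state `x`. -/
def Feasible {n m : ℕ} (f : Vec n → Vec m → Vec n) (Z : Set (Vec n × Vec m))
    (Uset : Set (Vec m)) (N : ℕ) (x : Vec n) (u : ℕ → Vec m) : Prop :=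
  ∀ k < N, u k ∈ Uset ∧ (traj f x u k, u k) ∈ Z

/-- MPC open-loop cost `J_{N,M}` of the input sequence `u` from state `x`. -/
def Jcost {n m : ℕ} (f : Vec n → Vec m → Vec n) (κ : Vec n → Vec m)
    (ℓ : Vec n → Vec m → ℝ) (Z : Set (Vec n × Vec m)) (N M : ℕ) (x : Vec n)
    (u : ℕ → Vec m) : ℝ≥0∞ :=
  ENNReal.ofReal (∑ k ∈ Finset.range N, ℓ (traj f x u k) (u k)) +
    Vtail f κ ℓ Z M (traj f x u N)

/-- MPC value function `V_{N,M}(x)` (equal to `+∞` if the problem is infeasible). -/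
def Vmpc {n m : ℕ} (f : Vec n → Vec m → Vec n) (κ : Vec n → Vec m)
    (ℓ : Vec n → Vec m → ℝ) (Z : Set (Vec n × Vec m)) (Uset : Set (Vec m))
    (N M : ℕ) (x : Vec n) : ℝ≥0∞ :=
  ⨅ (u : ℕ → Vec m) (_ : Feasible f Z Uset N x u), Jcost f κ ℓ Z N M x u

/-- `u` is a minimizing (optimal) input sequence for `V_{N,M}(x)`. -/
def IsMinimizer {n m : ℕ} (f : Vec n → Vec m → Vec n) (κ : Vec n → Vec m)
    (ℓ : Vec n → Vec m → ℝ) (Z : Set (Vec n × Vec m)) (Uset : Set (Vec m))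
    (N M : ℕ) (x : Vec n) (u : ℕ → Vec m) : Prop :=
  Feasible f Z Uset N x u ∧ Vmpc f κ ℓ Z Uset N M x = Jcost f κ ℓ Z N M x u

/-- Infinite-horizon optimal cost `V_{∞,0}(x)`. -/
def Vinf {n m : ℕ} (f : Vec n → Vec m → Vec n) (ℓ : Vec n → Vec m → ℝ)
    (Z : Set (Vec n × Vec m)) (Uset : Set (Vec m)) (x : Vec n) : ℝ≥0∞ :=
  ⨅ (u : ℕ → Vec m) (_ : ∀ k, u k ∈ Uset ∧ (traj f x u k, u k) ∈ Z),
    ∑' k : ℕ, ENNReal.ofReal (ℓ (traj f x u k) (u k))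

/-- Assumption 2 (locally stabilizing controller): exponential decay of the stage
cost along the κ-closed loop and constraint satisfaction, locally (`ℓ_min(x) ≤ ε`). -/
def Assumption2 {n m : ℕ} (f : Vec n → Vec m → Vec n) (κ : Vec n → Vec m)
    (ℓ : Vec n → Vec m → ℝ) (Z : Set (Vec n × Vec m)) (Uset : Set (Vec m))
    (ρ C ε : ℝ) : Prop :=
  ρ ∈ Set.Ico (0 : ℝ) 1 ∧ 1 ≤ C ∧ 0 < ε ∧
    ∀ x : Vec n, lmin ℓ Uset x ≤ ε → ∀ k : ℕ,
      ℓ (phiX f κ x k) (κ (phiX f κ x k)) ≤ C * ρ ^ k * lmin ℓ Uset x ∧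
      (phiX f κ x k, κ (phiX f κ x k)) ∈ Z

/-- A class-`K∞` function: continuous, strictly increasing and unbounded on `[0,∞)`
with `α(0) = 0`. -/
def IsKInfty (α : ℝ → ℝ) : Prop :=
  ContinuousOn α (Set.Ici 0) ∧ StrictMonoOn α (Set.Ici 0) ∧ α 0 = 0 ∧
    Tendsto α atTop atTop


/-! ### Auxiliary lemmas -/

lemma traj_zero {n m : ℕ} (f : Vec n → Vec m → Vec n) (x : Vec n) (u : ℕ → Vec m) :
    traj f x u 0 = x := rfl

lemma sum_range_add'' (f : ℕ → ℝ) (a b : ℕ) :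
    ∑ k ∈ range (a + b), f k = ∑ k ∈ range a, f k + ∑ k ∈ range b, f (a + k) := by
  induction b with
  | zero => simp
  | succ b ih => rw [Nat.add_succ, Finset.sum_range_succ, ih, Finset.sum_range_succ]; ring

lemma phiX_add {n m : ℕ} (f : Vec n → Vec m → Vec n) (κ : Vec n → Vec m) (x : Vec n)
    (i j : ℕ) : phiX f κ (phiX f κ x i) j = phiX f κ x (i + j) := by
  induction j with
  | zero => simp [phiX]
  | succ j ih => rw [Nat.add_succ]; simp [phiX, ih]

lemma traj_shift {n m : ℕ} (f : Vec n → Vec m → Vec n) (x : Vec n) (u : ℕ → Vec m)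
    (k : ℕ) : traj f (f x (u 0)) (fun i => u (i + 1)) k = traj f x u (k + 1) := by
  induction k with
  | zero => rfl
  | succ k ih => simp only [traj]; rw [ih]; rfl

lemma lmin_le {n m : ℕ} (ℓ : Vec n → Vec m → ℝ) (Uset : Set (Vec m))
    (hℓ0 : ∀ x u, 0 ≤ ℓ x u) (x : Vec n) {u : Vec m} (hu : u ∈ Uset) :
    lmin ℓ Uset x ≤ ℓ x u :=
  csInf_le ⟨0, by rintro y ⟨w, hw, rfl⟩; exact hℓ0 x w⟩ ⟨u, hu, rfl⟩

lemma lmin_nonneg {n m : ℕ} (ℓ : Vec n → Vec m → ℝ) (Uset : Set (Vec m))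
    (hℓ0 : ∀ x u, 0 ≤ ℓ x u) (hne : Uset.Nonempty) (x : Vec n) :
    0 ≤ lmin ℓ Uset x :=
  le_csInf (hne.image _) (by rintro y ⟨w, hw, rfl⟩; exact hℓ0 x w)

lemma geom_sum_le' (r : ℝ) (h0 : 0 ≤ r) (h1 : r < 1) (K : ℕ) :
    ∑ i ∈ range K, r ^ i ≤ (1 - r)⁻¹ := by
  have hg : (∑ i ∈ range K, r ^ i) * (r - 1) = r ^ K - 1 := geom_sum_mul r K
  have hpow : 0 ≤ r ^ K := pow_nonneg h0 K
  have h2 : 0 < 1 - r := by linarith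
  have hinv : (1 - r)⁻¹ * (1 - r) = 1 := inv_mul_cancel₀ h2.ne'
  nlinarith [hg, hpow, hinv, h2]

/-- Sum of the stage cost along the `κ`-loop is at most `C (1-ρ)⁻¹ ℓ_min(y)`. -/
lemma tail_le_gamma {n m : ℕ} (f : Vec n → Vec m → Vec n) (κ : Vec n → Vec m)
    (ℓ : Vec n → Vec m → ℝ) (Uset : Set (Vec m)) (ρ C : ℝ)
    (hρ0 : 0 ≤ ρ) (hρ1 : ρ < 1) (hC0 : 0 ≤ C) (y : Vec n)
    (hL0 : 0 ≤ lmin ℓ Uset y)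
    (hbd : ∀ i : ℕ, ℓ (phiX f κ y i) (κ (phiX f κ y i)) ≤ C * ρ ^ i * lmin ℓ Uset y)
    (K : ℕ) :
    ∑ i ∈ range K, ℓ (phiX f κ y i) (κ (phiX f κ y i)) ≤ C * (1 - ρ)⁻¹ * lmin ℓ Uset y := by
  have h1 : ∑ i ∈ range K, ℓ (phiX f κ y i) (κ (phiX f κ y i)) ≤
      ∑ i ∈ range K, C * lmin ℓ Uset y * ρ ^ i := by
    refine Finset.sum_le_sum fun i _ => ?_
    calc ℓ (phiX f κ y i) (κ (phiX f κ y i)) ≤ C * ρ ^ i * lmin ℓ Uset y := hbd i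
      _ = C * lmin ℓ Uset y * ρ ^ i := by ring
  rw [← Finset.mul_sum] at h1
  have h2 : C * lmin ℓ Uset y * (∑ i ∈ range K, ρ ^ i) ≤
      C * lmin ℓ Uset y * (1 - ρ)⁻¹ :=
    mul_le_mul_of_nonneg_left (geom_sum_le' ρ hρ0 hρ1 K) (by positivity)
  calc ∑ i ∈ range K, ℓ (phiX f κ y i) (κ (phiX f κ y i))
      ≤ C * lmin ℓ Uset y * (1 - ρ)⁻¹ := le_trans h1 h2
    _ = C * (1 - ρ)⁻¹ * lmin ℓ Uset y := by ring

/-- Candidate-solution bound: follow `u` up to time `j`, then the local controller. -/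
lemma cand_bound {n m : ℕ}
    (f : Vec n → Vec m → Vec n) (κ : Vec n → Vec m) (ℓ : Vec n → Vec m → ℝ)
    (Z : Set (Vec n × Vec m)) (Uset : Set (Vec m)) (ρ C ε : ℝ)
    (hℓ0 : ∀ x u, 0 ≤ ℓ x u) (hκU : ∀ x, κ x ∈ Uset)
    (hA2 : ∀ x : Vec n, lmin ℓ Uset x ≤ ε → ∀ k : ℕ,
      ℓ (phiX f κ x k) (κ (phiX f κ x k)) ≤ C * ρ ^ k * lmin ℓ Uset x ∧
      (phiX f κ x k, κ (phiX f κ x k)) ∈ Z)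
    (N M : ℕ) (x : Vec n) (u : ℕ → Vec m) (j : ℕ) (hjN : j ≤ N)
    (hfeas : ∀ k < j, u k ∈ Uset ∧ (traj f x u k, u k) ∈ Z)
    (hl : lmin ℓ Uset (traj f x u j) ≤ ε) :
    Vmpc f κ ℓ Z Uset N M x ≤ ENNReal.ofReal
      (∑ k ∈ range j, ℓ (traj f x u k) (u k) +
       ∑ i ∈ range (N - j + M),
         ℓ (phiX f κ (traj f x u j) i) (κ (phiX f κ (traj f x u j) i))) := by
  set y := traj f x u j with hy
  set v : ℕ → Vec m := fun k => if k < j then u k else κ (phiX f κ y (k - j)) with hv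
  have s1 : ∀ k ≤ j, traj f x v k = traj f x u k := by
    intro k hk
    induction k with
    | zero => rfl
    | succ k ih =>
        simp only [traj]
        rw [ih (Nat.le_of_succ_le hk)]
        have : v k = u k := if_pos (Nat.lt_of_succ_le hk)
        rw [this]
  have s2 : ∀ i : ℕ, traj f x v (j + i) = phiX f κ y i := by
    intro i
    induction i with
    | zero => exact s1 j le_rfl
    | succ i ih =>
        rw [Nat.add_succ]
        simp only [traj, phiX]
        rw [ih]
        have hvk : v (j + i) = κ (phiX f κ y i) := by
          have : ¬ (j + i < j) := by omega
          simp only [hv, this, if_false, Nat.add_sub_cancel_left]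
        rw [hvk]
  have hfv : Feasible f Z Uset N x v := by
    intro k hk
    by_cases hkj : k < j
    · have h1 := hfeas k hkj
      have hvk : v k = u k := if_pos hkj
      have htr : traj f x v k = traj f x u k := s1 k hkj.le
      rw [hvk, htr]; exact h1
    · push_neg at hkj
      obtain ⟨i, rfl⟩ : ∃ i, k = j + i := ⟨k - j, by omega⟩
      have hvk : v (j + i) = κ (phiX f κ y i) := by
        have : ¬ (j + i < j) := by omega
        simp only [hv, this, if_false, Nat.add_sub_cancel_left]
      rw [hvk, s2 i]
      exact ⟨hκU _, (hA2 y hl i).2⟩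
  have htrN : traj f x v N = phiX f κ y (N - j) := by
    have hNe : N = j + (N - j) := by omega
    calc traj f x v N = traj f x v (j + (N - j)) := by rw [← hNe]
      _ = phiX f κ y (N - j) := s2 _
  have htail : Vtail f κ ℓ Z M (traj f x v N) =
      ENNReal.ofReal (∑ k ∈ range M, ℓ (phiX f κ y (N - j + k)) (κ (phiX f κ y (N - j + k)))) := by
    rw [htrN, Vtail]
    have hcond : ∀ k < M,
        (phiX f κ (phiX f κ y (N - j)) k, κ (phiX f κ (phiX f κ y (N - j)) k)) ∈ Z := by
      intro k hk
      rw [phiX_add]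
      exact (hA2 y hl (N - j + k)).2
    rw [if_pos hcond]
    congr 1
    refine Finset.sum_congr rfl fun k hk => ?_
    rw [phiX_add]
  have hsum : ∑ k ∈ range N, ℓ (traj f x v k) (v k) =
      ∑ k ∈ range j, ℓ (traj f x u k) (u k) +
      ∑ k ∈ range (N - j), ℓ (phiX f κ y k) (κ (phiX f κ y k)) := by
    have hNsplit : N = j + (N - j) := by omega
    conv_lhs => rw [hNsplit]
    rw [sum_range_add'']
    congr 1
    · refine Finset.sum_congr rfl fun k hk => ?_
      rw [Finset.mem_range] at hk
      have hvk : v k = u k := if_pos hk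
      rw [s1 k hk.le, hvk]
    · refine Finset.sum_congr rfl fun k hk => ?_
      have hvk : v (j + k) = κ (phiX f κ y k) := by
        have : ¬ (j + k < j) := by omega
        simp only [hv, this, if_false, Nat.add_sub_cancel_left]
      rw [s2 k, hvk]
  have hle : Vmpc f κ ℓ Z Uset N M x ≤ Jcost f κ ℓ Z N M x v :=
    iInf_le_of_le v (iInf_le_of_le hfv le_rfl)
  refine hle.trans ?_
  rw [Jcost, htail, hsum]
  rw [← ENNReal.ofReal_add (add_nonneg (Finset.sum_nonneg fun k _ => hℓ0 _ _)
    (Finset.sum_nonneg fun k _ => hℓ0 _ _)) (Finset.sum_nonneg fun k _ => hℓ0 _ _)]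
  apply ENNReal.ofReal_le_ofReal
  rw [add_assoc]
  gcongr
  rw [sum_range_add'']

/-- The abstract cost-to-go decay chain. -/
lemma decay_chain (γ ε Vbar : ℝ) (hγ1 : 1 < γ) (hε : 0 < ε)
    (N₀ N : ℕ) (hVb : Vbar ≤ (N₀ : ℝ) * ε + γ * ε) (hN0N : N₀ ≤ N) (Y : ℕ → ℝ)
    (hY0 : Y 0 ≤ Vbar) (hYnn : ∀ j, 0 ≤ Y j)
    (hdec : ∀ j < N, ∃ lam : ℝ, 0 ≤ lam ∧ Y (j + 1) = Y j - lam ∧ (ε < lam ∨ Y j ≤ γ * lam)) :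
    Y N ≤ ((γ - 1) / γ) ^ (N - N₀) * min (γ * ε) (Y 0) := by
  have hγ0 : (0 : ℝ) < γ := by linarith
  have hργ0 : 0 ≤ (γ - 1) / γ := div_nonneg (by linarith) (by linarith)
  have hργ1 : (γ - 1) / γ ≤ 1 := by rw [div_le_one hγ0]; linarith
  have hanti : ∀ j < N, Y (j + 1) ≤ Y j := by
    intro j hj
    obtain ⟨lam, hlam0, heq, -⟩ := hdec j hj
    rw [heq]; linarith
  have hmono : ∀ i j, i ≤ j → j ≤ N → Y j ≤ Y i := by
    have key : ∀ d i, i + d ≤ N → Y (i + d) ≤ Y i := by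
      intro d
      induction d with
      | zero => intro i _; simp
      | succ d ih =>
          intro i hle
          have h1 : Y (i + d + 1) ≤ Y (i + d) := hanti _ (by omega)
          have h2 : Y (i + d) ≤ Y i := ih i (by omega)
          calc Y (i + (d + 1)) = Y (i + d + 1) := by rw [Nat.add_succ]
            _ ≤ Y i := le_trans h1 h2
    intro i j hij hjN
    have : j = i + (j - i) := by omega
    rw [this]; exact key (j - i) i (by omega)
  have hYN₀γ : Y N₀ ≤ γ * ε := by
    by_contra h
    push_neg at h
    have hgt : ∀ j ≤ N₀, γ * ε < Y j := fun j hj =>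
      lt_of_lt_of_le h (hmono j N₀ hj hN0N)
    have hdrop : ∀ j < N₀, Y (j + 1) ≤ Y j - ε := by
      intro j hj
      obtain ⟨lam, h0, heq, hcase⟩ := hdec j (lt_of_lt_of_le hj hN0N)
      have hYj := hgt j hj.le
      have hlam : ε < lam := by
        rcases hcase with h' | h'
        · exact h'
        · nlinarith
      rw [heq]; linarith
    have hlin : ∀ j ≤ N₀, Y j ≤ Y 0 - j * ε := by
      intro j hj
      induction j with
      | zero => simp
      | succ j ih =>
          have h1 := ih (Nat.le_of_succ_le hj)
          have h2 := hdrop j (Nat.lt_of_succ_le hj)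
          push_cast
          push_cast at h1
          linarith
    have hfin := hlin N₀ le_rfl
    have hgt' := hgt N₀ le_rfl
    linarith
  have hB : ∀ i, N₀ + i ≤ N → Y (N₀ + i) ≤ ((γ - 1) / γ) ^ i * Y N₀ := by
    intro i
    induction i with
    | zero => intro _; simp
    | succ i ih =>
        intro hle
        have hih := ih (by omega)
        obtain ⟨lam, h0, heq, hcase⟩ := hdec (N₀ + i) (by omega)
        have hpowle : ((γ - 1) / γ) ^ i ≤ 1 := pow_le_one₀ hργ0 hργ1
        have hYj : Y (N₀ + i) ≤ γ * ε := by
          have h1 : ((γ - 1) / γ) ^ i * Y N₀ ≤ 1 * Y N₀ :=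
            mul_le_mul_of_nonneg_right hpowle (hYnn N₀)
          calc Y (N₀ + i) ≤ ((γ - 1) / γ) ^ i * Y N₀ := hih
            _ ≤ 1 * Y N₀ := h1
            _ = Y N₀ := one_mul _
            _ ≤ γ * ε := hYN₀γ
        have hlam : Y (N₀ + i) / γ ≤ lam := by
          rcases hcase with h' | h'
          · have : Y (N₀ + i) / γ ≤ ε := by rw [div_le_iff₀ hγ0]; nlinarith
            linarith
          · rw [div_le_iff₀ hγ0]; nlinarith
        have hstep : Y (N₀ + i + 1) ≤ (γ - 1) / γ * Y (N₀ + i) := by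
          have hkey : (γ - 1) / γ * Y (N₀ + i) = Y (N₀ + i) - Y (N₀ + i) / γ := by
            field_simp
          rw [heq, hkey]; linarith
        calc Y (N₀ + (i + 1)) = Y (N₀ + i + 1) := by rw [Nat.add_succ]
          _ ≤ (γ - 1) / γ * Y (N₀ + i) := hstep
          _ ≤ (γ - 1) / γ * (((γ - 1) / γ) ^ i * Y N₀) :=
              mul_le_mul_of_nonneg_left hih hργ0
          _ = ((γ - 1) / γ) ^ (i + 1) * Y N₀ := by ring
  have hfin := hB (N - N₀) (by omega)
  have hNN : N₀ + (N - N₀) = N := by omega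
  rw [hNN] at hfin
  have hmin : Y N₀ ≤ min (γ * ε) (Y 0) := le_min hYN₀γ (hmono 0 N₀ (Nat.zero_le _) hN0N)
  calc Y N ≤ ((γ - 1) / γ) ^ (N - N₀) * Y N₀ := hfin
    _ ≤ ((γ - 1) / γ) ^ (N - N₀) * min (γ * ε) (Y 0) :=
        mul_le_mul_of_nonneg_left hmin (pow_nonneg hργ0 _)

set_option maxHeartbeats 2000000

/-- Theorem 1, suboptimality w.r.t. the infinite horizon: under
Assumptions 1 and 2 with `ρ > 0`, `γ = C/(1-ρ) > 1` and `N > N_M`, every `x₀` with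
`V_{N,M}(x₀) ≤ V̄` satisfies `V_{N,M}(x₀) ≤ (1 + γ ρ_γ^(N-N₀)) V_{∞,0}(x₀)`;
combined with the closed-loop performance bound,
`Σ_{k=0}^∞ ℓ(x(k),u(k)) ≤ V_{∞,0}(x₀)/α_{N,M}` with
`α_{N,M} = ε_{N,M}/(1 + γ ρ_γ^(N-N₀)) ∈ (0, ε_{N,M}]`. -/
theorem closed_loop_suboptimality {n m : ℕ}
    (f : Vec n → Vec m → Vec n) (κ : Vec n → Vec m) (ℓ : Vec n → Vec m → ℝ)
    (Z : Set (Vec n × Vec m)) (Uset : Set (Vec m)) (ρ C ε : ℝ)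
    (hf : Continuous fun p : Vec n × Vec m => f p.1 p.2) (hf0 : f 0 0 = 0)
    (hℓ : Continuous fun p : Vec n × Vec m => ℓ p.1 p.2) (hℓ0 : ∀ x u, 0 ≤ ℓ x u)
    (hZ0 : ((0 : Vec n), (0 : Vec m)) ∈ interior Z) (hU : IsCompact Uset)
    (hκ : Continuous κ) (hκU : ∀ x, κ x ∈ Uset)
    (αlow αup : ℝ → ℝ) (hαlow : IsKInfty αlow) (hαup : IsKInfty αup)
    (hA1 : ∀ x : Vec n, αlow ‖x‖ ≤ lmin ℓ Uset x ∧ lmin ℓ Uset x ≤ αup ‖x‖)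
    (hℓ00 : ℓ 0 0 = 0)
    (hA2 : Assumption2 f κ ℓ Z Uset ρ C ε) (hρpos : 0 < ρ)
    (Vbar γ ργ γlow NM : ℝ) (hVbar : 0 < Vbar) (hγ : γ = C / (1 - ρ)) (hγ1 : 1 < γ)
    (hργ : ργ = (γ - 1) / γ) (hγlow : γlow = min γ (Vbar / ε))
    (N₀ : ℕ) (hN₀ : N₀ = ⌈max 0 ((Vbar - γ * ε) / ε)⌉₊)
    (M : ℕ) (hM : 1 ≤ M)
    (hNM : NM = N₀ + max (Real.log γlow)
        (max (Real.log (C ^ 2 * ρ ^ M / (1 - ρ ^ M))) 0) /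
        (Real.log γ - Real.log (γ - 1)))
    (N : ℕ) (hN : NM < N) (εNM αNM : ℝ)
    (hεNM : εNM = 1 - C ^ 2 * ργ ^ (N - N₀) * ρ ^ M / (1 - ρ ^ M))
    (hαNM : αNM = εNM / (1 + γ * ργ ^ (N - N₀)))
    (x₀ : Vec n) (hx₀ : Vmpc f κ ℓ Z Uset N M x₀ ≤ ENNReal.ofReal Vbar)
    (xcl : ℕ → Vec n) (ustar : ℕ → ℕ → Vec m) (hinit : xcl 0 = x₀)
    (hopt : ∀ t, IsMinimizer f κ ℓ Z Uset N M (xcl t) (ustar t))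
    (hstep : ∀ t, xcl (t + 1) = f (xcl t) (ustar t 0)) :
    Vmpc f κ ℓ Z Uset N M x₀ ≤
      ENNReal.ofReal (1 + γ * ργ ^ (N - N₀)) * Vinf f ℓ Z Uset x₀ ∧
    αNM ∈ Set.Ioc (0 : ℝ) εNM ∧
    ∑' k : ℕ, ENNReal.ofReal (ℓ (xcl k) (ustar k 0)) ≤
      Vinf f ℓ Z Uset x₀ / ENNReal.ofReal αNM := by
  
  classical
  obtain ⟨⟨hρ0, hρ1⟩, hC1, hεp, hA2'⟩ := hA2
  have hUne : Uset.Nonempty := ⟨κ 0, hκU 0⟩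
  have hγ0 : (0:ℝ) < γ := by linarith
  have hρB : (0:ℝ) < 1 - ρ := by linarith
  have hCγ : C = γ * (1 - ρ) := by rw [hγ]; field_simp
  have hC0 : (0:ℝ) ≤ C := by linarith
  have hργ0 : 0 < ργ := by rw [hργ]; exact div_pos (by linarith) hγ0
  have hργ1 : ργ < 1 := by rw [hργ, div_lt_one hγ0]; linarith
  have hMne : M ≠ 0 := by omega
  have hρM1 : ρ ^ M < 1 := pow_lt_one₀ hρ0 hρ1 hMne
  have hρM0 : 0 < ρ ^ M := pow_pos hρpos M
  have hG : 0 < 1 - ρ ^ M := by linarith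
  -- logarithmic horizon bounds
  set L : ℝ := Real.log γ - Real.log (γ - 1) with hLdef
  have hL : 0 < L := sub_pos.mpr (Real.log_lt_log (by linarith) (by linarith))
  set Dnum : ℝ := max (Real.log γlow)
      (max (Real.log (C ^ 2 * ρ ^ M / (1 - ρ ^ M))) 0) with hDnum
  have hDnum0 : 0 ≤ Dnum := le_trans (le_max_right _ _) (le_max_right _ _)
  have hNMge : (N₀:ℝ) ≤ NM := by
    rw [hNM]
    have : 0 ≤ Dnum / L := div_nonneg hDnum0 hL.le
    linarith
  have hN0N : N₀ ≤ N := by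
    have h := lt_of_le_of_lt hNMge hN
    exact_mod_cast h.le
  have hN0N' : N₀ < N := by
    have h := lt_of_le_of_lt hNMge hN
    exact_mod_cast h
  have hN1 : 1 ≤ N := by omega
  have hkcast : ((N - N₀ : ℕ) : ℝ) = (N:ℝ) - N₀ := by
    rw [Nat.cast_sub hN0N]
  have hklog : ∀ A : ℝ, 0 < A → Real.log A ≤ Dnum → ργ ^ (N - N₀) < A⁻¹ := by
    intro A hA hlog
    have h2 : (NM - N₀) * L = Dnum := by
      rw [hNM]
      have h3 : (N₀:ℝ) + Dnum / L - N₀ = Dnum / L := by ring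
      rw [h3, div_mul_cancel₀ _ hL.ne']
    have h1 : Real.log A < ((N - N₀ : ℕ):ℝ) * L := by
      have h4 : (NM - N₀) * L < ((N:ℝ) - N₀) * L :=
        mul_lt_mul_of_pos_right (by linarith) hL
      rw [hkcast]
      linarith [h2]
    have hlogργ : Real.log ργ = Real.log (γ - 1) - Real.log γ := by
      rw [hργ, Real.log_div (by linarith) (by linarith)]
    have h5 : Real.log (ργ ^ (N - N₀)) < Real.log A⁻¹ := by
      rw [Real.log_pow, Real.log_inv, hlogργ]
      have h6 : ((N - N₀:ℕ):ℝ) * (Real.log (γ-1) - Real.log γ) = -(((N - N₀:ℕ):ℝ) * L) := by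
        rw [hLdef]; ring
      rw [h6]; linarith
    exact (Real.log_lt_log_iff (pow_pos hργ0 _) (inv_pos.mpr hA)).mp h5
  have hγlow0 : 0 < γlow := by
    rw [hγlow]; exact lt_min hγ0 (div_pos hVbar hεp)
  set c := ργ ^ (N - N₀) with hc
  have hc0 : 0 < c := pow_pos hργ0 _
  have hcγlow : c * γlow < 1 := by
    have h := hklog γlow hγlow0 (le_max_left _ _)
    calc c * γlow < γlow⁻¹ * γlow := mul_lt_mul_of_pos_right h hγlow0
      _ = 1 := inv_mul_cancel₀ hγlow0.ne'
  have hA2pos : 0 < C ^ 2 * ρ ^ M / (1 - ρ ^ M) :=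
    div_pos (mul_pos (pow_pos (by linarith : (0:ℝ) < C) 2) hρM0) hG
  have hcA2 : c * (C ^ 2 * ρ ^ M / (1 - ρ ^ M)) < 1 := by
    have h := hklog _ hA2pos (le_trans (le_max_left _ _) (le_max_right _ _))
    calc c * (C ^ 2 * ρ ^ M / (1 - ρ ^ M))
        < (C ^ 2 * ρ ^ M / (1 - ρ ^ M))⁻¹ * (C ^ 2 * ρ ^ M / (1 - ρ ^ M)) :=
          mul_lt_mul_of_pos_right h hA2pos
      _ = 1 := inv_mul_cancel₀ hA2pos.ne'
  have hεNM1 : 1 - εNM = C ^ 2 * c * ρ ^ M / (1 - ρ ^ M) := by rw [hεNM]; ring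
  have hεNMpos : 0 < εNM := by
    have heq2 : 1 - εNM = c * (C ^ 2 * ρ ^ M / (1 - ρ ^ M)) := by rw [hεNM1]; ring
    have := hcA2
    rw [← heq2] at this
    linarith
  have hεNMle1 : εNM ≤ 1 := by
    have h0 : 0 ≤ C ^ 2 * c * ρ ^ M / (1 - ρ ^ M) := by positivity
    linarith [hεNM1]
  have hγc0 : (0:ℝ) ≤ γ * c := by positivity
  have hfac1 : (1:ℝ) ≤ 1 + γ * c := by linarith
  have hfacpos : (0:ℝ) < 1 + γ * c := by linarith
  -- PART 2
  have part2 : αNM ∈ Set.Ioc (0:ℝ) εNM := by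
    constructor
    · rw [hαNM]; exact div_pos hεNMpos hfacpos
    · rw [hαNM]; exact div_le_self hεNMpos.le hfac1
  -- min bound
  have hγlowε : γlow * ε = min (γ * ε) Vbar := by
    rw [hγlow, min_mul_of_nonneg _ _ hεp.le, div_mul_cancel₀ _ hεp.ne']
  have hcB : c * min (γ * ε) Vbar < ε := by
    rw [← hγlowε, ← mul_assoc]
    calc c * γlow * ε < 1 * ε := mul_lt_mul_of_pos_right hcγlow hεp
      _ = ε := one_mul ε
  have hVb' : Vbar ≤ (N₀:ℝ) * ε + γ * ε := by
    have h1 : ((Vbar - γ * ε) / ε) ≤ (N₀:ℝ) := by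
      rw [hN₀]; exact le_trans (le_max_right _ _) (Nat.le_ceil _)
    rw [div_le_iff₀ hεp] at h1
    linarith
  have hγeq : C * (1 - ρ)⁻¹ = γ := by rw [hγ, div_eq_mul_inv]
  -- ============ per-step analysis of the MPC subproblems ============
  have opt_analysis : ∀ x : Vec n, Vmpc f κ ℓ Z Uset N M x ≤ ENNReal.ofReal Vbar →
      ∀ u : ℕ → Vec m, Feasible f Z Uset N x u →
      Vmpc f κ ℓ Z Uset N M x = Jcost f κ ℓ Z N M x u →
      Vmpc f κ ℓ Z Uset N M (f x (u 0)) ≤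
        ENNReal.ofReal ((Vmpc f κ ℓ Z Uset N M x).toReal - εNM * ℓ x (u 0)) ∧
        εNM * ℓ x (u 0) ≤ (Vmpc f κ ℓ Z Uset N M x).toReal := by
    intro x hxV u hfeas heq
    set xN := traj f x u N with hxN
    have hfinV : Vmpc f κ ℓ Z Uset N M x ≠ ⊤ :=
      ne_top_of_le_ne_top ENNReal.ofReal_ne_top hxV
    have hfinJ : Jcost f κ ℓ Z N M x u ≠ ⊤ := heq ▸ hfinV
    have hVtne : Vtail f κ ℓ Z M xN ≠ ⊤ := by
      intro h
      apply hfinJ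
      rw [Jcost, ← hxN, h, add_top]
    have hcond : ∀ k' < M, (phiX f κ xN k', κ (phiX f κ xN k')) ∈ Z := by
      by_contra hcnot
      exact hVtne (by rw [Vtail, if_neg hcnot])
    set W := ∑ i ∈ range M, ℓ (phiX f κ xN i) (κ (phiX f κ xN i)) with hW
    have hVt : Vtail f κ ℓ Z M xN = ENNReal.ofReal W := by rw [Vtail, if_pos hcond]
    have hW0 : 0 ≤ W := Finset.sum_nonneg fun i _ => hℓ0 _ _
    set R := ∑ k ∈ range N, ℓ (traj f x u k) (u k) + W with hR
    have hR0 : 0 ≤ R := add_nonneg (Finset.sum_nonneg fun k _ => hℓ0 _ _) hW0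
    have hVxR : Vmpc f κ ℓ Z Uset N M x = ENNReal.ofReal R := by
      rw [heq, Jcost, ← hxN, hVt,
        ← ENNReal.ofReal_add (Finset.sum_nonneg fun k _ => hℓ0 _ _) hW0]
    have hRVbar : R ≤ Vbar := by
      rw [hVxR] at hxV
      exact (ENNReal.ofReal_le_ofReal_iff hVbar.le).mp hxV
    have htoR : (Vmpc f κ ℓ Z Uset N M x).toReal = R := by
      rw [hVxR, ENNReal.toReal_ofReal hR0]
    set Y : ℕ → ℝ := fun j => ∑ k ∈ Finset.Ico j N, ℓ (traj f x u k) (u k) + W with hY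
    have hY0R : Y 0 = R := by
      have h1 : Y 0 = ∑ k ∈ Finset.Ico 0 N, ℓ (traj f x u k) (u k) + W := rfl
      rw [h1, hR, Finset.range_eq_Ico]
    have hYnn : ∀ j, 0 ≤ Y j := fun j =>
      add_nonneg (Finset.sum_nonneg fun k _ => hℓ0 _ _) hW0
    have hYsub : ∀ j, j < N → Y (j+1) = Y j - ℓ (traj f x u j) (u j) := by
      intro j hj
      have h := Finset.sum_eq_sum_Ico_succ_bot hj (fun k => ℓ (traj f x u k) (u k))
      have h1 : Y j = ∑ k ∈ Finset.Ico j N, ℓ (traj f x u k) (u k) + W := rfl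
      have h2 : Y (j+1) = ∑ k ∈ Finset.Ico (j+1) N, ℓ (traj f x u k) (u k) + W := rfl
      rw [h1, h2, h]; ring
    have hprefix : ∀ j, j ≤ N →
        ∑ k ∈ range j, ℓ (traj f x u k) (u k) + Y j = R := by
      intro j hj
      have h := Finset.sum_range_add_sum_Ico (fun k => ℓ (traj f x u k) (u k)) hj
      have h1 : Y j = ∑ k ∈ Finset.Ico j N, ℓ (traj f x u k) (u k) + W := rfl
      rw [h1, hR]
      linarith [h]
    have hYopt : ∀ j, j ≤ N → lmin ℓ Uset (traj f x u j) ≤ ε →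
        Y j ≤ γ * lmin ℓ Uset (traj f x u j) := by
      intro j hj hlm
      have hcb := cand_bound f κ ℓ Z Uset ρ C ε hℓ0 hκU hA2' N M x u j hj
        (fun k hk => hfeas k (lt_of_lt_of_le hk hj)) hlm
      have htg := tail_le_gamma f κ ℓ Uset ρ C hρ0 hρ1 hC0 (traj f x u j)
        (lmin_nonneg ℓ Uset hℓ0 hUne _) (fun i => (hA2' _ hlm i).1) (N - j + M)
      rw [hγeq] at htg
      rw [hVxR] at hcb
      have hRHS0 : 0 ≤ ∑ k ∈ range j, ℓ (traj f x u k) (u k) +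
          ∑ i ∈ range (N - j + M),
            ℓ (phiX f κ (traj f x u j) i) (κ (phiX f κ (traj f x u j) i)) :=
        add_nonneg (Finset.sum_nonneg fun k _ => hℓ0 _ _)
          (Finset.sum_nonneg fun k _ => hℓ0 _ _)
      have hreal := (ENNReal.ofReal_le_ofReal_iff hRHS0).mp hcb
      have hpre := hprefix j hj
      linarith
    have hdec : ∀ j, j < N → ∃ lam : ℝ, 0 ≤ lam ∧ Y (j+1) = Y j - lam ∧
        (ε < lam ∨ Y j ≤ γ * lam) := by
      intro j hj
      refine ⟨ℓ (traj f x u j) (u j), hℓ0 _ _, hYsub j hj, ?_⟩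
      have hlml : lmin ℓ Uset (traj f x u j) ≤ ℓ (traj f x u j) (u j) :=
        lmin_le ℓ Uset hℓ0 _ (hfeas j hj).1
      by_cases hlm : lmin ℓ Uset (traj f x u j) ≤ ε
      · right
        have h1 := hYopt j hj.le hlm
        have h2 : γ * lmin ℓ Uset (traj f x u j) ≤ γ * ℓ (traj f x u j) (u j) :=
          mul_le_mul_of_nonneg_left hlml hγ0.le
        linarith
      · left; push_neg at hlm; linarith
    have hchain := decay_chain γ ε Vbar hγ1 hεp N₀ N hVb' hN0N Y
      (by rw [hY0R]; exact hRVbar) hYnn hdec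
    have hYN : Y N = W := by
      have h1 : Y N = ∑ k ∈ Finset.Ico N N, ℓ (traj f x u k) (u k) + W := rfl
      rw [h1, Finset.Ico_self, Finset.sum_empty, zero_add]
    rw [← hργ, ← hc, hYN, hY0R] at hchain
    have hWε : W < ε := by
      have h1 : min (γ * ε) R ≤ min (γ * ε) Vbar := min_le_min le_rfl hRVbar
      have h2 : c * min (γ * ε) R ≤ c * min (γ * ε) Vbar :=
        mul_le_mul_of_nonneg_left h1 hc0.le
      linarith [hcB]
    have hterm : ∀ i, i < M → ℓ (phiX f κ xN i) (κ (phiX f κ xN i)) ≤ W := by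
      intro i hi
      rw [hW]
      exact Finset.single_le_sum (f := fun k => ℓ (phiX f κ xN k) (κ (phiX f κ xN k)))
        (fun j _ => hℓ0 _ _) (Finset.mem_range.mpr hi)
    have hlmφ : ∀ i, i < M → lmin ℓ Uset (phiX f κ xN i) ≤ ε := fun i hi =>
      le_trans (le_trans (lmin_le ℓ Uset hℓ0 _ (hκU _)) (hterm i hi)) hWε.le
    have hlmxN : lmin ℓ Uset xN ≤ ε := by
      have h := hlmφ 0 (by omega)
      simpa [phiX] using h
    set E := ℓ (phiX f κ xN M) (κ (phiX f κ xN M)) with hE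
    have hE0 : 0 ≤ E := hℓ0 _ _
    have hφM : ∀ i, i < M →
        ρ ^ i * E ≤ C * ρ ^ M * ℓ (phiX f κ xN i) (κ (phiX f κ xN i)) := by
      intro i hi
      have ha := (hA2' (phiX f κ xN i) (hlmφ i hi) (M - i)).1
      rw [phiX_add, (show i + (M - i) = M by omega)] at ha
      have hb : lmin ℓ Uset (phiX f κ xN i) ≤ ℓ (phiX f κ xN i) (κ (phiX f κ xN i)) :=
        lmin_le ℓ Uset hℓ0 _ (hκU _)
      have hpow : ρ ^ (M - i) * ρ ^ i = ρ ^ M := by rw [← pow_add]; congr 1; omega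
      have h1 : E ≤ C * ρ ^ (M - i) * ℓ (phiX f κ xN i) (κ (phiX f κ xN i)) := by
        calc E ≤ C * ρ ^ (M - i) * lmin ℓ Uset (phiX f κ xN i) := ha
          _ ≤ C * ρ ^ (M - i) * ℓ (phiX f κ xN i) (κ (phiX f κ xN i)) :=
              mul_le_mul_of_nonneg_left hb (by positivity)
      calc ρ ^ i * E
          ≤ ρ ^ i * (C * ρ ^ (M - i) * ℓ (phiX f κ xN i) (κ (phiX f κ xN i))) :=
            mul_le_mul_of_nonneg_left h1 (pow_nonneg hρ0 i)
        _ = C * (ρ ^ (M - i) * ρ ^ i) * ℓ (phiX f κ xN i) (κ (phiX f κ xN i)) := by ring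
        _ = C * ρ ^ M * ℓ (phiX f κ xN i) (κ (phiX f κ xN i)) := by rw [hpow]
    set GS := ∑ i ∈ range M, ρ ^ i with hGS
    have hGSmul : GS * (1 - ρ) = 1 - ρ ^ M := by
      rw [hGS]
      linear_combination (-1:ℝ) * geom_sum_mul ρ M
    have hEsum : GS * E ≤ C * ρ ^ M * W := by
      rw [hGS, hW, Finset.sum_mul, Finset.mul_sum]
      exact Finset.sum_le_sum fun i hi => hφM i (Finset.mem_range.mp hi)
    have hlam0 : lmin ℓ Uset x ≤ ℓ x (u 0) :=
      lmin_le ℓ Uset hℓ0 _ (hfeas 0 (by omega)).1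
    have hl00 : 0 ≤ ℓ x (u 0) := hℓ0 _ _
    have hWγ : W ≤ c * (γ * ℓ x (u 0)) := by
      by_cases hlx : lmin ℓ Uset x ≤ ε
      · have h0 := hYopt 0 (Nat.zero_le N) (by rw [traj_zero]; exact hlx)
        rw [hY0R, traj_zero] at h0
        have h0' : γ * lmin ℓ Uset x ≤ γ * ℓ x (u 0) :=
          mul_le_mul_of_nonneg_left hlam0 hγ0.le
        have hminR : min (γ * ε) R ≤ R := min_le_right _ _
        calc W ≤ c * min (γ * ε) R := hchain
          _ ≤ c * R := mul_le_mul_of_nonneg_left hminR hc0.le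
          _ ≤ c * (γ * ℓ x (u 0)) :=
              mul_le_mul_of_nonneg_left (le_trans h0 h0') hc0.le
      · push_neg at hlx
        have h1 : min (γ * ε) R ≤ γ * ε := min_le_left _ _
        have h2 : γ * ε ≤ γ * ℓ x (u 0) :=
          mul_le_mul_of_nonneg_left (by linarith) hγ0.le
        calc W ≤ c * min (γ * ε) R := hchain
          _ ≤ c * (γ * ℓ x (u 0)) :=
              mul_le_mul_of_nonneg_left (le_trans h1 h2) hc0.le
    have hEex : E ≤ (1 - εNM) * ℓ x (u 0) := by
      have e1 : E * (1 - ρ ^ M) = GS * E * (1 - ρ) := by rw [← hGSmul]; ring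
      have e2 : GS * E * (1 - ρ) ≤ C * ρ ^ M * W * (1 - ρ) :=
        mul_le_mul_of_nonneg_right hEsum hρB.le
      have e3 : C * ρ ^ M * W * (1 - ρ) ≤ C * ρ ^ M * (c * (γ * ℓ x (u 0))) * (1 - ρ) := by
        apply mul_le_mul_of_nonneg_right _ hρB.le
        exact mul_le_mul_of_nonneg_left hWγ (by positivity)
      have h1εNM : (1 - εNM) * (1 - ρ ^ M) = C ^ 2 * c * ρ ^ M := by
        rw [hεNM1]
        field_simp
      have e4 : C * ρ ^ M * (c * (γ * ℓ x (u 0))) * (1 - ρ) =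
          (1 - εNM) * ℓ x (u 0) * (1 - ρ ^ M) := by
        have hγρ : γ * (1 - ρ) = C := hCγ.symm
        calc C * ρ ^ M * (c * (γ * ℓ x (u 0))) * (1 - ρ)
            = C * ρ ^ M * c * ℓ x (u 0) * (γ * (1 - ρ)) := by ring
          _ = C * ρ ^ M * c * ℓ x (u 0) * C := by rw [hγρ]
          _ = C ^ 2 * c * ρ ^ M * ℓ x (u 0) := by ring
          _ = (1 - εNM) * ℓ x (u 0) * (1 - ρ ^ M) := by rw [← h1εNM]; ring
      have e5 : E * (1 - ρ ^ M) ≤ (1 - εNM) * ℓ x (u 0) * (1 - ρ ^ M) := by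
        calc E * (1 - ρ ^ M) = GS * E * (1 - ρ) := e1
          _ ≤ C * ρ ^ M * W * (1 - ρ) := e2
          _ ≤ C * ρ ^ M * (c * (γ * ℓ x (u 0))) * (1 - ρ) := e3
          _ = (1 - εNM) * ℓ x (u 0) * (1 - ρ ^ M) := e4
      exact le_of_mul_le_mul_right e5 hG
    -- candidate at the successor state
    have hsucc : Vmpc f κ ℓ Z Uset N M (f x (u 0)) ≤
        ENNReal.ofReal (R - εNM * ℓ x (u 0)) := by
      set u' : ℕ → Vec m := fun i => u (i + 1) with hu'
      have hend : traj f (f x (u 0)) u' (N - 1) = xN := by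
        have h := traj_shift f x u (N - 1)
        rw [(show N - 1 + 1 = N by omega)] at h
        exact h
      have hpf : ∀ k, k < N - 1 → u' k ∈ Uset ∧ (traj f (f x (u 0)) u' k, u' k) ∈ Z := by
        intro k hk
        have h1 := hfeas (k + 1) (by omega)
        have h2 : traj f (f x (u 0)) u' k = traj f x u (k + 1) := traj_shift f x u k
        exact ⟨h1.1, by rw [h2]; exact h1.2⟩
      have hcb := cand_bound f κ ℓ Z Uset ρ C ε hℓ0 hκU hA2' N M (f x (u 0)) u'
        (N - 1) (by omega) hpf (by rw [hend]; exact hlmxN)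
      rw [hend] at hcb
      rw [(show N - (N - 1) + M = M + 1 by omega)] at hcb
      rw [Finset.sum_range_succ] at hcb
      have hps : ∑ k ∈ range (N - 1), ℓ (traj f (f x (u 0)) u' k) (u' k) =
          ∑ k ∈ range (N - 1), ℓ (traj f x u (k + 1)) (u (k + 1)) := by
        refine Finset.sum_congr rfl fun k _ => ?_
        rw [(show traj f (f x (u 0)) u' k = traj f x u (k+1) from traj_shift f x u k)]
      rw [hps] at hcb
      have hsplit : ∑ k ∈ range N, ℓ (traj f x u k) (u k) =
          (∑ k ∈ range (N - 1), ℓ (traj f x u (k + 1)) (u (k + 1))) + ℓ x (u 0) := by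
        have h := Finset.sum_range_succ' (fun k => ℓ (traj f x u k) (u k)) (N - 1)
        rw [(show N - 1 + 1 = N by omega)] at h
        rw [h, traj_zero]
      refine le_trans hcb (ENNReal.ofReal_le_ofReal ?_)
      linarith [hEex, hsplit, hR, hW, hE]
    constructor
    · rw [htoR]; exact hsucc
    · rw [htoR]
      have hlam0R : ℓ x (u 0) ≤ R := by
        have h1 : ℓ (traj f x u 0) (u 0) ≤ ∑ k ∈ range N, ℓ (traj f x u k) (u k) :=
          Finset.single_le_sum (f := fun k => ℓ (traj f x u k) (u k))
            (fun k _ => hℓ0 _ _) (Finset.mem_range.mpr (by omega))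
        rw [traj_zero] at h1
        linarith [hW0, hR]
      have h2 : εNM * ℓ x (u 0) ≤ 1 * ℓ x (u 0) :=
        mul_le_mul_of_nonneg_right hεNMle1 hl00
      rw [one_mul] at h2
      linarith [hlam0R]
  -- ============ closed-loop facts ============
  have hVcl : ∀ t, Vmpc f κ ℓ Z Uset N M (xcl t) ≤ ENNReal.ofReal Vbar := by
    intro t
    induction t with
    | zero => rw [hinit]; exact hx₀
    | succ t ih =>
        obtain ⟨hfe, hje⟩ := hopt t
        have h := (opt_analysis (xcl t) ih (ustar t) hfe hje).1
        rw [hstep t]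
        refine le_trans h ?_
        have hV0 : ENNReal.ofReal ((Vmpc f κ ℓ Z Uset N M (xcl t)).toReal) ≤
            ENNReal.ofReal Vbar := by
          rw [ENNReal.ofReal_toReal (ne_top_of_le_ne_top ENNReal.ofReal_ne_top ih)]
          exact ih
        refine le_trans (ENNReal.ofReal_le_ofReal ?_) hV0
        have := mul_nonneg hεNMpos.le (hℓ0 (xcl t) (ustar t 0))
        linarith
  have hVstep : ∀ t, (Vmpc f κ ℓ Z Uset N M (xcl (t+1))).toReal ≤
      (Vmpc f κ ℓ Z Uset N M (xcl t)).toReal - εNM * ℓ (xcl t) (ustar t 0) := by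
    intro t
    obtain ⟨hfe, hje⟩ := hopt t
    have h := opt_analysis (xcl t) (hVcl t) (ustar t) hfe hje
    have h1 := h.1
    have h2 := h.2
    rw [← hstep t] at h1
    have harg : 0 ≤ (Vmpc f κ ℓ Z Uset N M (xcl t)).toReal -
        εNM * ℓ (xcl t) (ustar t 0) := by linarith
    have h3 := ENNReal.toReal_mono ENNReal.ofReal_ne_top h1
    rw [ENNReal.toReal_ofReal harg] at h3
    exact h3
  have htel : ∀ T : ℕ, εNM * ∑ t ∈ range T, ℓ (xcl t) (ustar t 0) ≤
      (Vmpc f κ ℓ Z Uset N M (xcl 0)).toReal := by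
    have key : ∀ T : ℕ, εNM * ∑ t ∈ range T, ℓ (xcl t) (ustar t 0) ≤
        (Vmpc f κ ℓ Z Uset N M (xcl 0)).toReal -
        (Vmpc f κ ℓ Z Uset N M (xcl T)).toReal := by
      intro T
      induction T with
      | zero => simp
      | succ T ih =>
          rw [Finset.sum_range_succ, mul_add]
          have h := hVstep T
          linarith
    intro T
    have h := key T
    have h2 : (0:ℝ) ≤ (Vmpc f κ ℓ Z Uset N M (xcl T)).toReal := ENNReal.toReal_nonneg
    linarith
  have htsum : ∑' k : ℕ, ENNReal.ofReal (ℓ (xcl k) (ustar k 0)) ≤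
      ENNReal.ofReal ((Vmpc f κ ℓ Z Uset N M (xcl 0)).toReal / εNM) := by
    rw [ENNReal.tsum_eq_iSup_nat]
    refine iSup_le fun T => ?_
    rw [← ENNReal.ofReal_sum_of_nonneg (fun i _ => hℓ0 _ _)]
    apply ENNReal.ofReal_le_ofReal
    rw [le_div_iff₀ hεNMpos]
    have := htel T
    linarith
  -- ============ PART 1 ============
  have part1 : Vmpc f κ ℓ Z Uset N M x₀ ≤
      ENNReal.ofReal (1 + γ * c) * Vinf f ℓ Z Uset x₀ := by
    rcases le_or_gt (ENNReal.ofReal Vbar) (Vinf f ℓ Z Uset x₀) with hge | hlt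
    · calc Vmpc f κ ℓ Z Uset N M x₀ ≤ ENNReal.ofReal Vbar := hx₀
        _ ≤ Vinf f ℓ Z Uset x₀ := hge
        _ = 1 * Vinf f ℓ Z Uset x₀ := (one_mul _).symm
        _ ≤ ENNReal.ofReal (1 + γ * c) * Vinf f ℓ Z Uset x₀ :=
            mul_le_mul_left (ENNReal.one_le_ofReal.mpr hfac1) _
    · have hVine : Vinf f ℓ Z Uset x₀ ≠ ⊤ := ne_top_of_lt (hlt.trans ENNReal.ofReal_lt_top)
      set Jr := (Vinf f ℓ Z Uset x₀).toReal with hJr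
      have hJr0 : 0 ≤ Jr := ENNReal.toReal_nonneg
      have hJrV : Jr < Vbar := by
        have h := (ENNReal.toReal_lt_toReal hVine ENNReal.ofReal_ne_top).mpr hlt
        rw [ENNReal.toReal_ofReal hVbar.le] at h
        exact h
      have hmain : ∀ η : ℝ, 0 < η → η ≤ Vbar - Jr →
          Vmpc f κ ℓ Z Uset N M x₀ ≤ ENNReal.ofReal ((1 + γ * c) * (Jr + η)) := by
        intro η hη hηV
        have hlt2 : (⨅ (u : ℕ → Vec m)
            (_ : ∀ k, u k ∈ Uset ∧ (traj f x₀ u k, u k) ∈ Z),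
            ∑' k : ℕ, ENNReal.ofReal (ℓ (traj f x₀ u k) (u k))) <
            Vinf f ℓ Z Uset x₀ + ENNReal.ofReal η :=
          ENNReal.lt_add_right hVine (ENNReal.ofReal_pos.mpr hη).ne'
        obtain ⟨u, hu⟩ := iInf_lt_iff.mp hlt2
        obtain ⟨hufeas, hucost⟩ := iInf_lt_iff.mp hu
        set g : ℕ → ℝ := fun k => ℓ (traj f x₀ u k) (u k) with hg
        have hg0 : ∀ k, 0 ≤ g k := fun k => hℓ0 _ _
        have hfinQ : Vinf f ℓ Z Uset x₀ + ENNReal.ofReal η ≠ ⊤ :=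
          ENNReal.add_ne_top.mpr ⟨hVine, ENNReal.ofReal_ne_top⟩
        have hgne : ∑' k : ℕ, ENNReal.ofReal (g k) ≠ ⊤ :=
          ne_top_of_lt (hucost.trans (Ne.lt_top hfinQ))
        have hsummable : Summable g :=
          (ENNReal.summable_toReal hgne).congr fun k => ENNReal.toReal_ofReal (hg0 k)
        set S := ∑' k : ℕ, g k with hS
        have hS0 : 0 ≤ S := tsum_nonneg fun k => hg0 k
        have hSof : ENNReal.ofReal S = ∑' k : ℕ, ENNReal.ofReal (g k) :=
          ENNReal.ofReal_tsum_of_nonneg hg0 hsummable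
        have hSle : S ≤ Jr + η := by
          have h5 : ENNReal.ofReal S ≤ Vinf f ℓ Z Uset x₀ + ENNReal.ofReal η := by
            rw [hSof]; exact hucost.le
          have h6 := ENNReal.toReal_mono hfinQ h5
          rw [ENNReal.toReal_ofReal hS0,
            ENNReal.toReal_add hVine ENNReal.ofReal_ne_top,
            ENNReal.toReal_ofReal hη.le] at h6
          exact h6
        have hSVbar : S ≤ Vbar := by linarith
        set T : ℕ → ℝ := fun j => ∑' i : ℕ, g (i + j) with hT
        have hT0S : T 0 = S := tsum_congr fun i => by rw [Nat.add_zero]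
        have hTnn : ∀ j, 0 ≤ T j := fun j => tsum_nonneg fun i => hg0 _
        have hsum_j : ∀ j, Summable (fun i => g (i + j)) := fun j =>
          (summable_nat_add_iff j).mpr hsummable
        have hTsub : ∀ j, T (j+1) = T j - g j := by
          intro j
          have h7 : T j = g (0 + j) + ∑' (i:ℕ), g (i + 1 + j) := Summable.tsum_eq_zero_add (hsum_j j)
          have h8 : (∑' (i:ℕ), g (i + 1 + j)) = T (j + 1) :=
            tsum_congr fun i => by rw [show i + 1 + j = i + (j + 1) from by omega]
          rw [h8, (show (0:ℕ) + j = j from by omega)] at h7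
          linarith
        have hTg : ∀ j, g j ≤ T j := by
          intro j
          have h := hTsub j
          linarith [hTnn (j+1)]
        have hprefixT : ∀ j : ℕ, ∑ k ∈ range j, g k + T j = S := fun j =>
          Summable.sum_add_tsum_nat_add j hsummable
        have hexists : ∃ j, j ≤ N ∧ g j ≤ ε ∧ γ * g j ≤ T j + γ * c * S := by
          by_contra hcon
          push_neg at hcon
          have hdec : ∀ j, j < N → ∃ lam : ℝ, 0 ≤ lam ∧ T (j+1) = T j - lam ∧
              (ε < lam ∨ T j ≤ γ * lam) := by
            intro j hj
            refine ⟨g j, hg0 j, hTsub j, ?_⟩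
            by_cases hgj : g j ≤ ε
            · right
              have h := hcon j hj.le hgj
              have h9 : 0 ≤ γ * c * S := mul_nonneg (mul_nonneg hγ0.le hc0.le) hS0
              linarith
            · left; push_neg at hgj; exact hgj
          have hchain := decay_chain γ ε Vbar hγ1 hεp N₀ N hVb' hN0N T
            (by rw [hT0S]; exact hSVbar) hTnn hdec
          rw [← hργ, ← hc, hT0S] at hchain
          have hTN1 : T N ≤ c * S :=
            le_trans hchain (mul_le_mul_of_nonneg_left (min_le_right _ _) hc0.le)
          have hTN2 : T N < ε := by
            have h9 : min (γ*ε) S ≤ min (γ*ε) Vbar := min_le_min le_rfl hSVbar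
            have h10 : c * min (γ*ε) S ≤ c * min (γ*ε) Vbar :=
              mul_le_mul_of_nonneg_left h9 hc0.le
            linarith [hcB]
          have hgN : g N ≤ ε := le_trans (hTg N) hTN2.le
          have hcontra := hcon N le_rfl hgN
          have h11 : γ * g N ≤ γ * T N := mul_le_mul_of_nonneg_left (hTg N) hγ0.le
          have h12 : γ * T N ≤ γ * (c * S) := mul_le_mul_of_nonneg_left hTN1 hγ0.le
          have h13 : γ * (c * S) = γ * c * S := by ring
          have h14 := hTnn N
          linarith
        obtain ⟨j, hjN, hgε, hgood⟩ := hexists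
        have hlml : lmin ℓ Uset (traj f x₀ u j) ≤ ℓ (traj f x₀ u j) (u j) :=
          lmin_le ℓ Uset hℓ0 _ (hufeas j).1
        have hgj_eq : g j = ℓ (traj f x₀ u j) (u j) := rfl
        have hlmj : lmin ℓ Uset (traj f x₀ u j) ≤ ε := by
          rw [hgj_eq] at hgε; linarith
        have hcb := cand_bound f κ ℓ Z Uset ρ C ε hℓ0 hκU hA2' N M x₀ u j hjN
          (fun k _ => hufeas k) hlmj
        have htg := tail_le_gamma f κ ℓ Uset ρ C hρ0 hρ1 hC0 (traj f x₀ u j)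
          (lmin_nonneg ℓ Uset hℓ0 hUne _) (fun i => (hA2' _ hlmj i).1) (N - j + M)
        rw [hγeq] at htg
        have hpre : ∑ k ∈ range j, ℓ (traj f x₀ u k) (u k) + T j = S := hprefixT j
        have hlm2 : γ * lmin ℓ Uset (traj f x₀ u j) ≤ γ * g j := by
          rw [hgj_eq]
          exact mul_le_mul_of_nonneg_left hlml hγ0.le
        refine le_trans hcb ?_
        apply ENNReal.ofReal_le_ofReal
        have hγcS : γ * c * S ≤ γ * c * (Jr + η) :=
          mul_le_mul_of_nonneg_left hSle (by positivity)
        have hexp : (1 + γ*c) * (Jr + η) = (Jr + η) + γ * c * (Jr + η) := by ring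
        linarith [htg, hlm2, hgood, hpre, hSle, hγcS, hexp]
      have hfin : ENNReal.ofReal ((1 + γ * c) * Jr) =
          ENNReal.ofReal (1 + γ * c) * Vinf f ℓ Z Uset x₀ := by
        rw [ENNReal.ofReal_mul hfacpos.le, hJr, ENNReal.ofReal_toReal hVine]
      rw [← hfin]
      apply ENNReal.le_of_forall_pos_le_add
      intro e he hb
      set η := min (Vbar - Jr) ((e:ℝ) / (1 + γ * c)) with hη
      have he' : (0:ℝ) < (e:ℝ) := by exact_mod_cast he
      have hη0 : 0 < η := lt_min (by linarith) (div_pos he' hfacpos)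
      have h1 := hmain η hη0 (min_le_left _ _)
      refine le_trans h1 ?_
      have h2 : (1 + γ*c) * (Jr + η) = (1 + γ*c) * Jr + (1 + γ*c) * η := by ring
      rw [h2]
      refine le_trans ENNReal.ofReal_add_le ?_
      have h3 : (1 + γ*c) * η ≤ (e:ℝ) := by
        have h4 : η ≤ (e:ℝ) / (1 + γ * c) := min_le_right _ _
        rw [le_div_iff₀ hfacpos] at h4
        linarith
      have h4 : ENNReal.ofReal ((1+γ*c)*η) ≤ (e : ℝ≥0∞) := by
        rw [← ENNReal.ofReal_coe_nnreal]
        exact ENNReal.ofReal_le_ofReal h3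
      exact add_le_add_right h4 _
  -- ============ conclusion ============
  refine ⟨part1, part2, ?_⟩
  have hV0fin : Vmpc f κ ℓ Z Uset N M (xcl 0) ≠ ⊤ :=
    ne_top_of_le_ne_top ENNReal.ofReal_ne_top (hVcl 0)
  set V0 := (Vmpc f κ ℓ Z Uset N M (xcl 0)).toReal with hV0
  have hV00 : 0 ≤ V0 := ENNReal.toReal_nonneg
  have hαof : ENNReal.ofReal αNM ≠ 0 := (ENNReal.ofReal_pos.mpr part2.1).ne'
  rw [ENNReal.le_div_iff_mul_le (Or.inl hαof) (Or.inl ENNReal.ofReal_ne_top)]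
  have h5 : (∑' k : ℕ, ENNReal.ofReal (ℓ (xcl k) (ustar k 0))) * ENNReal.ofReal αNM ≤
      ENNReal.ofReal (V0 / εNM) * ENNReal.ofReal αNM := mul_le_mul_left htsum _
  have h6 : ENNReal.ofReal (V0 / εNM) * ENNReal.ofReal αNM =
      ENNReal.ofReal (V0 / (1 + γ * c)) := by
    rw [← ENNReal.ofReal_mul (div_nonneg hV00 hεNMpos.le)]
    congr 1
    rw [hαNM]
    field_simp
  have h7 : ENNReal.ofReal (V0 / (1 + γ * c)) ≤ Vinf f ℓ Z Uset x₀ := by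
    have hne0 : ENNReal.ofReal (1 + γ*c) ≠ 0 := (ENNReal.ofReal_pos.mpr hfacpos).ne'
    rw [← ENNReal.mul_le_mul_iff_left hne0 ENNReal.ofReal_ne_top]
    have h8 : ENNReal.ofReal (V0/(1+γ*c)) * ENNReal.ofReal (1+γ*c) =
        ENNReal.ofReal V0 := by
      rw [← ENNReal.ofReal_mul (div_nonneg hV00 hfacpos.le)]
      rw [div_mul_cancel₀ _ hfacpos.ne']
    rw [h8]
    have h9 : ENNReal.ofReal V0 = Vmpc f κ ℓ Z Uset N M x₀ := by
      rw [hV0, ENNReal.ofReal_toReal hV0fin, hinit]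
    rw [h9]
    calc Vmpc f κ ℓ Z Uset N M x₀
        ≤ ENNReal.ofReal (1+γ*c) * Vinf f ℓ Z Uset x₀ := part1
      _ = Vinf f ℓ Z Uset x₀ * ENNReal.ofReal (1+γ*c) := mul_comm _ _
  calc (∑' k : ℕ, ENNReal.ofReal (ℓ (xcl k) (ustar k 0))) * ENNReal.ofReal αNM
      ≤ ENNReal.ofReal (V0 / εNM) * ENNReal.ofReal αNM := h5
    _ = ENNReal.ofReal (V0 / (1 + γ * c)) := h6
    _ ≤ Vinf f ℓ Z Uset x₀ := h7
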